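/- Let f ∈ C²([0,∞)) be convex, positive, nondecreasing with f(t)/t → ∞ as t → ∞. Suppose for some γ ∈ [0,2] and ε > 0 with ε − γ > 1/2, there exist constants c > 0 and T > 0 such that f(t) f''(t) ≥ c f'(t)^{1+ε} / (t^{2−γ} f(t)^γ) for all t ≥ T. Then there exist constants C > 0 and R > 0 such that for all r ≥ R, f(r) ∫₀^r f(t) f''(t) dt ≥ C f(r)^{2+ε−γ} / r^{2+ε−γ}. -/

import Mathlib

open Real Set Filter MeasureTheory

lemma holder_interval {g : ℝ → ℝ} {a b p : ℝ} (hab : a ≤ b) (hp : 1 < p)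
    (hgc : Continuous g) (hgnn : ∀ t ∈ Icc a b, 0 ≤ g t) :
    (∫ t in a..b, g t) ^ p ≤ (∫ t in a..b, g t ^ p) * (b - a) ^ (p - 1) := by
  set μ := volume.restrict (Ioc a b) with hμ
  haveI : IsFiniteMeasure μ := by
    constructor
    rw [hμ, Measure.restrict_apply_univ, Real.volume_Ioc]
    exact ENNReal.ofReal_lt_top
  have hpq : p.HolderConjugate (Real.conjExponent p) := Real.HolderConjugate.conjExponent hp
  set q := Real.conjExponent p with hq
  have hgnn_ae : 0 ≤ᵐ[μ] g :=
    ae_restrict_of_forall_mem measurableSet_Ioc (fun x hx => hgnn x (Ioc_subset_Icc_self hx))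
  obtain ⟨M, hM⟩ := (isCompact_Icc (a := a) (b := b)).exists_bound_of_continuousOn
    hgc.continuousOn
  have hmemg : MemLp g (ENNReal.ofReal p) μ :=
    MemLp.of_bound hgc.aestronglyMeasurable M
      (ae_restrict_of_forall_mem measurableSet_Ioc (fun x hx => hM x (Ioc_subset_Icc_self hx)))
  have hmem1 : MemLp (fun _ : ℝ => (1 : ℝ)) (ENNReal.ofReal q) μ := memLp_const 1
  have h := MeasureTheory.integral_mul_le_Lp_mul_Lq_of_nonneg hpq hgnn_ae
    (ae_of_all _ fun _ => zero_le_one) hmemg hmem1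
  simp only [mul_one, Real.one_rpow, integral_const, smul_eq_mul] at h
  rw [hμ, measureReal_def, Measure.restrict_apply_univ, Real.volume_Ioc,
    ENNReal.toReal_ofReal (by linarith)] at h
  have hA : (0:ℝ) ≤ ∫ x, g x ∂μ := integral_nonneg_of_ae hgnn_ae
  have hB : (0:ℝ) ≤ ∫ x, g x ^ p ∂μ := integral_nonneg_of_ae <| by
    filter_upwards [hgnn_ae] with x hx; exact Real.rpow_nonneg hx p
  have hba : (0:ℝ) ≤ b - a := by linarith
  have h2 : (∫ x, g x ∂μ) ^ p ≤
      ((∫ x, g x ^ p ∂μ) ^ (1/p) * (b - a) ^ (1/q)) ^ p :=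
    Real.rpow_le_rpow hA h hpq.nonneg
  rw [Real.mul_rpow (by positivity) (by positivity)] at h2
  rw [← Real.rpow_mul hB, ← Real.rpow_mul hba, one_div_mul_cancel hpq.ne_zero,
    Real.rpow_one] at h2
  have hq_eq : 1 / q * p = p - 1 := by
    rw [hq, Real.conjExponent]
    field_simp
  rw [hq_eq] at h2
  rw [intervalIntegral.integral_of_le hab, intervalIntegral.integral_of_le hab]
  exact h2

theorem stmt_6 (f : ℝ → ℝ) (hf : ContDiff ℝ 2 f)
    (hf_pos : ∀ t ∈ Ici (0:ℝ), 0 < f t)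
    (hf' : ∀ t ∈ Ici (0:ℝ), 0 ≤ deriv f t)
    (hf'' : ∀ t ∈ Ici (0:ℝ), 0 ≤ deriv (deriv f) t)
    (hf_super : Tendsto (fun t => f t / t) atTop atTop)
    (γ ε : ℝ) (hγ : γ ∈ Icc (0:ℝ) 2) (hε : 0 < ε) (hεγ : 1/2 < ε - γ)
    (c T : ℝ) (hc : 0 < c) (hT : 0 < T)
    (hyp : ∀ t, T ≤ t →
      c * (deriv f t) ^ (1 + ε) / (t ^ (2 - γ) * f t ^ γ) ≤ f t * deriv (deriv f) t) :
    ∃ C > 0, ∃ R > 0, ∀ r, R ≤ r →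
      C * f r ^ (2 + ε - γ) / r ^ (2 + ε - γ) ≤
        f r * ∫ t in (0:ℝ)..r, f t * deriv (deriv f) t := by
  have hfc : Continuous f := hf.continuous
  have hf'c : Continuous (deriv f) := hf.continuous_deriv (by norm_num)
  have hdf : ContDiff ℝ 1 (deriv f) := by
    have h2 : ContDiff ℝ ((1:ℕ) + 1) f := by exact_mod_cast hf
    exact (contDiff_succ_iff_deriv.mp h2).2.2
  have hf''c : Continuous (deriv (deriv f)) := hdf.continuous_deriv le_rfl
  have hdiff : Differentiable ℝ f := hf.differentiable two_ne_zero
  have hmono : MonotoneOn f (Ici 0) := by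
    apply monotoneOn_of_deriv_nonneg (convex_Ici 0) hfc.continuousOn
      (fun x _ => (hdiff x).differentiableWithinAt)
    intro x hx
    rw [interior_Ici] at hx
    exact hf' x (mem_Ici.mpr (le_of_lt (mem_Ioi.mp hx)))
  -- choose R
  obtain ⟨M, hM⟩ := Filter.eventually_atTop.mp (hf_super.eventually_ge_atTop (2 * f T))
  set R := max (max M 1) T with hR
  have hR_pos : (0:ℝ) < R := lt_of_lt_of_le one_pos ((le_max_right M 1).trans (le_max_left _ T))
  refine ⟨c / 2 ^ (1 + ε), by positivity, R, hR_pos, fun r hr => ?_⟩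
  have hr1 : (1:ℝ) ≤ r := le_trans ((le_max_right M 1).trans (le_max_left _ T)) hr
  have hrT : T ≤ r := le_trans (le_max_right _ T) hr
  have hrM : M ≤ r := le_trans ((le_max_left M 1).trans (le_max_left _ T)) hr
  have hr_pos : (0:ℝ) < r := lt_of_lt_of_le one_pos hr1
  have hfr : 0 < f r := hf_pos r (le_of_lt hr_pos)
  have hfT_nonneg : 0 ≤ f T := (hf_pos T hT.le).le
  have h2fT : 2 * f T ≤ f r := by
    have h1 := hM r hrM
    have h2 : 2 * f T * r ≤ f r := (le_div_iff₀ hr_pos).mp h1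
    nlinarith
  have hhalf : f r / 2 ≤ f r - f T := by linarith
  -- positivity of denominators
  have hγ0 := hγ.1
  have hγ2 := hγ.2
  set D := r ^ (2 - γ) * f r ^ γ with hD
  have hD_pos : 0 < D := by positivity
  -- interval integrability
  have hint_ff'' : ∀ a b : ℝ, IntervalIntegrable (fun t => f t * deriv (deriv f) t) volume a b :=
    fun a b => (hfc.mul hf''c).intervalIntegrable a b
  have hcont_pow : Continuous (fun t => deriv f t ^ (1 + ε)) :=
    hf'c.rpow_const (fun x => Or.inr (by positivity))
  -- Step A : drop [0, T]
  have hsplit : ∫ t in (0:ℝ)..r, f t * deriv (deriv f) t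
      = (∫ t in (0:ℝ)..T, f t * deriv (deriv f) t) + ∫ t in T..r, f t * deriv (deriv f) t :=
    (intervalIntegral.integral_add_adjacent_intervals (hint_ff'' 0 T) (hint_ff'' T r)).symm
  have h0T : 0 ≤ ∫ t in (0:ℝ)..T, f t * deriv (deriv f) t := by
    apply intervalIntegral.integral_nonneg hT.le
    intro u hu
    exact mul_nonneg (hf_pos u hu.1).le (hf'' u hu.1)
  -- Step B : pointwise lower bound on [T, r]
  have hB : (c / D) * (∫ t in T..r, deriv f t ^ (1 + ε))
      ≤ ∫ t in T..r, f t * deriv (deriv f) t := by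
    rw [← intervalIntegral.integral_const_mul]
    apply intervalIntegral.integral_mono_on hrT
      ((continuous_const.mul hcont_pow).intervalIntegrable T r) (hint_ff'' T r)
    intro t ht
    have htT : T ≤ t := ht.1
    have ht_pos : 0 < t := lt_of_lt_of_le hT htT
    have hft : 0 < f t := hf_pos t ht_pos.le
    have hDt_pos : 0 < t ^ (2 - γ) * f t ^ γ := by positivity
    have hDle : t ^ (2 - γ) * f t ^ γ ≤ D := by
      rw [hD]
      apply mul_le_mul (Real.rpow_le_rpow ht_pos.le ht.2 (by linarith))
        (Real.rpow_le_rpow hft.le (hmono ht_pos.le hr_pos.le ht.2) hγ0)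
        (by positivity) (by positivity)
    calc c / D * deriv f t ^ (1 + ε)
        = c * deriv f t ^ (1 + ε) / D := by ring
      _ ≤ c * deriv f t ^ (1 + ε) / (t ^ (2 - γ) * f t ^ γ) := by
          apply div_le_div_of_nonneg_left _ hDt_pos hDle
          have := hf' t ht_pos.le
          positivity
      _ ≤ f t * deriv (deriv f) t := hyp t htT
  -- FTC
  have hFTC : ∫ t in T..r, deriv f t = f r - f T :=
    intervalIntegral.integral_deriv_eq_sub (fun x _ => (hdiff x)) (hf'c.intervalIntegrable T r)
  -- Hölder
  have hp1 : (1:ℝ) < 1 + ε := by linarith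
  have hhold := holder_interval hrT hp1 hf'c
    (fun t ht => hf' t (le_trans hT.le ht.1))
  rw [hFTC, add_sub_cancel_left] at hhold
  set J := ∫ t in T..r, deriv f t ^ (1 + ε) with hJdef
  have hJ_nonneg : 0 ≤ J := by
    apply intervalIntegral.integral_nonneg hrT
    intro u hu
    exact Real.rpow_nonneg (hf' u (le_trans hT.le hu.1)) _
  have hJ : (f r / 2) ^ (1 + ε) / r ^ ε ≤ J := by
    rw [div_le_iff₀ (by positivity : (0:ℝ) < r ^ ε)]
    calc (f r / 2) ^ (1 + ε) ≤ (f r - f T) ^ (1 + ε) :=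
          Real.rpow_le_rpow (by positivity) hhalf (by positivity)
      _ ≤ J * (r - T) ^ ε := hhold
      _ ≤ J * r ^ ε := by
          apply mul_le_mul_of_nonneg_left _ hJ_nonneg
          exact Real.rpow_le_rpow (by linarith) (by linarith) hε.le
  -- key algebraic identity
  have h2r : r ^ ((2:ℝ) + ε - γ) = r ^ (2 - γ) * r ^ ε := by
    rw [← Real.rpow_add hr_pos]; ring_nf
  have h2f : f r * f r ^ (1 + ε) = f r ^ ((2:ℝ) + ε) := by
    nth_rewrite 1 [← Real.rpow_one (f r)]
    rw [← Real.rpow_add hfr, show (1:ℝ)+(1+ε) = 2+ε by ring]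
  have key : f r * (c / D * ((f r / 2) ^ (1 + ε) / r ^ ε))
      = c / 2 ^ (1 + ε) * f r ^ (2 + ε - γ) / r ^ (2 + ε - γ) := by
    rw [Real.div_rpow hfr.le (by norm_num : (0:ℝ) ≤ 2), Real.rpow_sub hfr (2 + ε) γ, h2r, hD]
    have hr2γ : (0:ℝ) < r ^ (2 - γ) := by positivity
    have hfrγ : (0:ℝ) < f r ^ γ := by positivity
    have h2e : (0:ℝ) < (2:ℝ) ^ (1 + ε) := by positivity
    have hre : (0:ℝ) < r ^ ε := by positivity
    field_simp
    rw [← h2f]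
  -- conclude
  calc c / 2 ^ (1 + ε) * f r ^ (2 + ε - γ) / r ^ (2 + ε - γ)
      = f r * (c / D * ((f r / 2) ^ (1 + ε) / r ^ ε)) := key.symm
    _ ≤ f r * (c / D * J) := by
        apply mul_le_mul_of_nonneg_left _ hfr.le
        apply mul_le_mul_of_nonneg_left hJ (by positivity)
    _ ≤ f r * ∫ t in T..r, f t * deriv (deriv f) t :=
        mul_le_mul_of_nonneg_left hB hfr.le
    _ ≤ f r * ∫ t in (0:ℝ)..r, f t * deriv (deriv f) t := by
        apply mul_le_mul_of_nonneg_left _ hfr.le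
        rw [hsplit]; linarith
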